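/- If A is a locally finitely presentable category such that every monomorphism-preserving functor from A to a locally finitely presentable category is finitely bounded if and only if it is finitary, then every finitely generated object of A is finitely presentable. -/

import Mathlib

open CategoryTheory Limits Opposite Function

universe w v u

/-- An object is finitely presentable if its hom-functor preserves filtered colimits. -/
def IsFinitelyPresentable {C : Type u} [Category.{v} C] (A : C) : Prop :=
  ∀ (J : Type v) [SmallCategory J] [IsFiltered J] (Dg : J ⥤ C) (cc : Cocone Dg),
    Nonempty (IsColimit cc) → Nonempty (IsColimit ((coyoneda.obj (op A)).mapCocone cc))

/-- A diagram of monomorphisms. -/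
def MonoDiagram {C : Type u} [Category.{v} C] {J : Type*} [Category J] (Dg : J ⥤ C) : Prop :=
  ∀ ⦃i j : J⦄ (f : i ⟶ j), Mono (Dg.map f)

/-- An object is finitely generated if its hom-functor preserves filtered colimits of
monomorphisms. -/
def IsFinitelyGenerated {C : Type u} [Category.{v} C] (A : C) : Prop :=
  ∀ (J : Type v) [SmallCategory J] [IsFiltered J] (Dg : J ⥤ C), MonoDiagram Dg →
    ∀ (cc : Cocone Dg),
      Nonempty (IsColimit cc) → Nonempty (IsColimit ((coyoneda.obj (op A)).mapCocone cc))

/-- A locally finitely presentable category: cocomplete, with a small family representing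
all finitely presentable objects, such that every object is a filtered colimit of
finitely presentable objects. -/
def IsLFP (C : Type u) [Category.{v} C] : Prop :=
  HasColimits C ∧
  (∃ (ι : Type v) (G : ι → C), (∀ i, _root_.IsFinitelyPresentable (G i)) ∧
    ∀ X : C, _root_.IsFinitelyPresentable X → ∃ i, Nonempty (X ≅ G i)) ∧
  ∀ X : C, ∃ (J : Type v) (_ : SmallCategory J) (_ : IsFiltered J) (Dg : J ⥤ C)
    (cc : Cocone Dg), (∀ j, _root_.IsFinitelyPresentable (Dg.obj j)) ∧ Nonempty (IsColimit cc) ∧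
    Nonempty (cc.pt ≅ X)

/-- A functor is finitary if it preserves filtered colimits. -/
def IsFinitary {C : Type u} [Category.{v} C] {B : Type w} [Category.{v} B] (F : C ⥤ B) : Prop :=
  ∀ (J : Type v) [SmallCategory J] [IsFiltered J] (Dg : J ⥤ C) (cc : Cocone Dg),
    Nonempty (IsColimit cc) → Nonempty (IsColimit (F.mapCocone cc))

/-- A functor preserves filtered colimits of monomorphisms. -/
def PreservesFilteredColimitsOfMonos {C : Type u} [Category.{v} C] {B : Type w} [Category.{v} B]
    (F : C ⥤ B) : Prop :=
  ∀ (J : Type v) [SmallCategory J] [IsFiltered J] (Dg : J ⥤ C), MonoDiagram Dg →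
    ∀ (cc : Cocone Dg), Nonempty (IsColimit cc) → Nonempty (IsColimit (F.mapCocone cc))

/-- A functor is finitely bounded if every finitely generated subobject of `F.obj A`
factorizes through the `F`-image of a finitely generated subobject of `A`. -/
def FinitelyBounded {C : Type u} [Category.{v} C] {B : Type w} [Category.{v} B]
    (F : C ⥤ B) : Prop :=
  ∀ (A : C) (M₀ : B) (m₀ : M₀ ⟶ F.obj A), Mono m₀ → IsFinitelyGenerated M₀ →
    ∃ (M : C) (m : M ⟶ A), Mono m ∧ IsFinitelyGenerated M ∧
      ∃ g : M₀ ⟶ F.obj M, g ≫ F.map m = m₀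

/-- A morphism is finitary if it factorizes through a finitely presentable object. -/
def FinitaryMorphism {C : Type u} [Category.{v} C] {X Y : C} (u : X ⟶ Y) : Prop :=
  ∃ (Z : C) (v : X ⟶ Z) (w : Z ⟶ Y), _root_.IsFinitelyPresentable Z ∧ v ≫ w = u

/-- A strictly locally finitely presentable category: every object has, for each
finitely generated subobject, a finitary endomorphism fixing that subobject. -/
def StrictlyLFP (C : Type u) [Category.{v} C] : Prop :=
  IsLFP C ∧
  ∀ (A M : C) (m : M ⟶ A), Mono m → IsFinitelyGenerated M →
    ∃ u : A ⟶ A, FinitaryMorphism u ∧ m ≫ u = m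

section TypeSide

/-- Finite types are finitely presentable in `Type v`. -/
lemma finite_isFinitelyPresentable (K : Type v) [Finite K] : _root_.IsFinitelyPresentable K := by
  intro J _ _ Dg cc hcc
  obtain ⟨hc⟩ := hcc
  constructor
  apply Types.FilteredColimit.isColimitOf
  · -- joint surjectivity
    intro (f : K ⟶ cc.pt)
    classical
    letI : Fintype K := Fintype.ofFinite K
    have hjs : ∀ x : K, ∃ j y, cc.ι.app j y = f x := fun x =>
      Types.jointly_surjective _ hc (f x)
    choose j y hy using hjs
    obtain ⟨S, hS⟩ := IsFiltered.sup_objs_exists (Finset.image j Finset.univ)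
    have φ : ∀ x : K, j x ⟶ S := fun x =>
      (hS (Finset.mem_image_of_mem j (Finset.mem_univ x))).some
    refine ⟨S, TypeCat.ofHom (fun x => Dg.map (φ x) (y x)), ?_⟩
    apply TypeCat.homEquiv.injective; funext x
    have h1 := types_congr_hom (cc.w (φ x)) (y x)
    dsimp at h1 ⊢
    rw [h1, hy]
  · -- equality
    intro a b (ga : K ⟶ Dg.obj a) (gb : K ⟶ Dg.obj b) hab
    classical
    letI : Fintype K := Fintype.ofFinite K
    have u := IsFiltered.leftToMax a b
    have hab' : ∀ x : K, cc.ι.app _ (Dg.map (IsFiltered.leftToMax a b) (ga x))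
        = cc.ι.app _ (Dg.map (IsFiltered.rightToMax a b) (gb x)) := by
      intro x
      have h1 := types_congr_hom (cc.w (IsFiltered.leftToMax a b)) (ga x)
      have h2 := types_congr_hom (cc.w (IsFiltered.rightToMax a b)) (gb x)
      have h0 := types_congr_hom (show ga ≫ cc.ι.app a = gb ≫ cc.ι.app b from hab) x
      dsimp at h1 h2 h0 ⊢
      rw [h1, h2, h0]
    have key : ∀ l : List K, ∃ (k : J) (w : IsFiltered.max a b ⟶ k),
        ∀ x ∈ l, Dg.map w (Dg.map (IsFiltered.leftToMax a b) (ga x))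
          = Dg.map w (Dg.map (IsFiltered.rightToMax a b) (gb x)) := by
      intro l
      induction l with
      | nil => exact ⟨_, 𝟙 _, by simp⟩
      | cons x l ih =>
        obtain ⟨k, w, hw⟩ := ih
        have hx : ∃ (k' : J) (w' : IsFiltered.max a b ⟶ k'),
            Dg.map w' (Dg.map (IsFiltered.leftToMax a b) (ga x))
              = Dg.map w' (Dg.map (IsFiltered.rightToMax a b) (gb x)) := by
          obtain ⟨k₁, f₁, g₁, h₁⟩ :=
            (Types.FilteredColimit.isColimit_eq_iff _ hc).1 (hab' x)
          refine ⟨_, f₁ ≫ IsFiltered.coeqHom f₁ g₁, ?_⟩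
          calc Dg.map (f₁ ≫ IsFiltered.coeqHom f₁ g₁)
                (Dg.map (IsFiltered.leftToMax a b) (ga x))
              = Dg.map (IsFiltered.coeqHom f₁ g₁)
                (Dg.map f₁ (Dg.map (IsFiltered.leftToMax a b) (ga x))) :=
                FunctorToTypes.map_comp_apply _ _ _ _
            _ = Dg.map (IsFiltered.coeqHom f₁ g₁)
                (Dg.map g₁ (Dg.map (IsFiltered.rightToMax a b) (gb x))) := by rw [h₁]
            _ = Dg.map (g₁ ≫ IsFiltered.coeqHom f₁ g₁)
                (Dg.map (IsFiltered.rightToMax a b) (gb x)) :=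
                (FunctorToTypes.map_comp_apply _ _ _ _).symm
            _ = Dg.map (f₁ ≫ IsFiltered.coeqHom f₁ g₁)
                (Dg.map (IsFiltered.rightToMax a b) (gb x)) := by
                rw [← IsFiltered.coeq_condition]
        obtain ⟨k', w', hw'⟩ := hx
        obtain ⟨k₂, t, t', ht⟩ : ∃ (k₂ : J) (t : k ⟶ k₂) (t' : k' ⟶ k₂),
            w ≫ t = w' ≫ t' := by
          refine ⟨_, IsFiltered.leftToMax k k'
              ≫ IsFiltered.coeqHom (w ≫ IsFiltered.leftToMax k k')
                (w' ≫ IsFiltered.rightToMax k k'),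
            IsFiltered.rightToMax k k' ≫ IsFiltered.coeqHom _ _, ?_⟩
          rw [← Category.assoc, ← Category.assoc]
          exact IsFiltered.coeq_condition _ _
        refine ⟨k₂, w ≫ t, ?_⟩
        intro x' hx'
        rcases List.mem_cons.1 hx' with rfl | hx'
        · calc Dg.map (w ≫ t) (Dg.map (IsFiltered.leftToMax a b) (ga x'))
              = Dg.map (w' ≫ t') (Dg.map (IsFiltered.leftToMax a b) (ga x')) := by rw [ht]
            _ = Dg.map t' (Dg.map w' (Dg.map (IsFiltered.leftToMax a b) (ga x'))) :=
                FunctorToTypes.map_comp_apply _ _ _ _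
            _ = Dg.map t' (Dg.map w' (Dg.map (IsFiltered.rightToMax a b) (gb x'))) := by
                rw [hw']
            _ = Dg.map (w' ≫ t') (Dg.map (IsFiltered.rightToMax a b) (gb x')) :=
                (FunctorToTypes.map_comp_apply _ _ _ _).symm
            _ = Dg.map (w ≫ t) (Dg.map (IsFiltered.rightToMax a b) (gb x')) := by rw [← ht]
        · calc Dg.map (w ≫ t) (Dg.map (IsFiltered.leftToMax a b) (ga x'))
              = Dg.map t (Dg.map w (Dg.map (IsFiltered.leftToMax a b) (ga x'))) :=
                FunctorToTypes.map_comp_apply _ _ _ _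
            _ = Dg.map t (Dg.map w (Dg.map (IsFiltered.rightToMax a b) (gb x'))) := by
                rw [hw x' hx']
            _ = Dg.map (w ≫ t) (Dg.map (IsFiltered.rightToMax a b) (gb x')) :=
                (FunctorToTypes.map_comp_apply _ _ _ _).symm
    obtain ⟨k, w, hw⟩ := key Finset.univ.toList
    refine ⟨k, IsFiltered.leftToMax a b ≫ w, IsFiltered.rightToMax a b ≫ w, ?_⟩
    apply TypeCat.homEquiv.injective; funext x
    have hx := hw x (by simp [Finset.mem_toList])
    dsimp
    rw [FunctorToTypes.map_comp_apply, FunctorToTypes.map_comp_apply]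
    exact hx

variable (X : Type v)

/-- The diagram of finite subsets of a type. -/
def finsetDiagram : Finset X ⥤ Type v where
  obj S := {x // x ∈ S}
  map {S T} f := TypeCat.ofHom fun x => ⟨x.1, leOfHom f x.2⟩

lemma finsetDiagram_monoDiagram : MonoDiagram (finsetDiagram X) := by
  intro S T f
  rw [CategoryTheory.mono_iff_injective]
  intro a b hab
  have h := congr_arg Subtype.val hab
  exact Subtype.ext (show a.1 = b.1 from h)

/-- The canonical cocone on the finite subset diagram. -/
def finsetCocone : Cocone (finsetDiagram X) where
  pt := X
  ι := { app := fun _ => TypeCat.ofHom fun x => x.1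
         naturality := fun _ _ _ => rfl }

/-- The canonical cocone is a colimit. -/
def finsetIsColimit : IsColimit (finsetCocone X) where
  desc s := TypeCat.ofHom fun x => s.ι.app {x} ⟨x, Finset.mem_singleton_self x⟩
  fac s S := by
    ext x
    have h := types_congr_hom (s.w (homOfLE (Finset.singleton_subset_iff.mpr x.2)))
      ⟨x.1, Finset.mem_singleton_self x.1⟩
    dsimp [finsetCocone, finsetDiagram] at h ⊢
    exact h.symm
  uniq s m hm := by
    ext x
    have := types_congr_hom (hm {x}) ⟨x, Finset.mem_singleton_self x⟩
    dsimp [finsetCocone] at this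
    exact this

lemma finite_of_isFinitelyGenerated (M : Type v) (hM : IsFinitelyGenerated M) : Finite M := by
  classical
  obtain ⟨hc'⟩ := hM (Finset M) (finsetDiagram M) (finsetDiagram_monoDiagram M)
    (finsetCocone M) ⟨finsetIsColimit M⟩
  obtain ⟨S, φ, hφ⟩ := Types.jointly_surjective _ hc'
    (show ((coyoneda.obj (op M)).mapCocone (finsetCocone M)).pt from 𝟙 M)
  have hφ' : φ ≫ (finsetCocone M).ι.app S = 𝟙 M := hφ
  have hinj : Function.Injective (show M ⟶ (finsetDiagram M).obj S from φ) := by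
    intro x y hxy
    have h1 : ((show M ⟶ (finsetDiagram M).obj S from φ) x).1 = x := types_congr_hom hφ' x
    have h2 : ((show M ⟶ (finsetDiagram M).obj S from φ) y).1 = y := types_congr_hom hφ' y
    rw [← h1, ← h2, hxy]
  haveI : Finite ((finsetDiagram M).obj S) := inferInstanceAs (Finite {x // x ∈ S})
  exact Finite.of_injective _ hinj

end TypeSide

lemma isLFP_type : IsLFP (Type v) := by
  refine ⟨inferInstance, ⟨ULift.{v} ℕ, fun n => ULift.{v} (Fin n.down), ?_, ?_⟩, ?_⟩
  · intro n
    exact finite_isFinitelyPresentable _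
  · intro X hX
    have hfg : IsFinitelyGenerated X := fun J _ _ Dg _ cc hcc => hX J Dg cc hcc
    have : Finite X := finite_of_isFinitelyGenerated X hfg
    letI : Fintype X := Fintype.ofFinite X
    exact ⟨⟨Fintype.card X⟩, ⟨((Fintype.equivFin X).trans Equiv.ulift.symm).toIso⟩⟩
  · intro X
    classical
    exact ⟨Finset X, inferInstance, inferInstance, finsetDiagram X, finsetCocone X,
      fun S => by
        haveI : Finite ((finsetDiagram X).obj S) := inferInstanceAs (Finite {x // x ∈ S})
        exact finite_isFinitelyPresentable _, ⟨finsetIsColimit X⟩, ⟨Iso.refl X⟩⟩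

section CSide

variable {C : Type u} [Category.{v} C]

/-- Monomorphisms in an lfp-like category are detected by maps from the generators. -/
lemma mono_of_generators {ι : Type v} {G : ι → C}
    (hGcov : ∀ X : C, _root_.IsFinitelyPresentable X → ∃ i, Nonempty (X ≅ G i))
    (hPres : ∀ X : C, ∃ (J : Type v) (_ : SmallCategory J) (_ : IsFiltered J) (Dg : J ⥤ C)
      (cc : Cocone Dg), (∀ j, _root_.IsFinitelyPresentable (Dg.obj j)) ∧ Nonempty (IsColimit cc) ∧
      Nonempty (cc.pt ≅ X))
    {U V : C} (m : U ⟶ V)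
    (hm : ∀ i (a b : G i ⟶ U), a ≫ m = b ≫ m → a = b) : Mono m := by
  constructor
  intro W u v huv
  obtain ⟨J, _, _, E, dd, hfp, ⟨hcol⟩, ⟨iso⟩⟩ := hPres W
  have h2 : iso.hom ≫ u = iso.hom ≫ v := by
    apply hcol.hom_ext
    intro k
    obtain ⟨i, ⟨ψ⟩⟩ := hGcov _ (hfp k)
    have h3 : (ψ.inv ≫ dd.ι.app k ≫ iso.hom ≫ u) = (ψ.inv ≫ dd.ι.app k ≫ iso.hom ≫ v) := by
      apply hm i
      simp only [Category.assoc, huv]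
    calc dd.ι.app k ≫ iso.hom ≫ u
        = ψ.hom ≫ ψ.inv ≫ dd.ι.app k ≫ iso.hom ≫ u := by simp
      _ = ψ.hom ≫ ψ.inv ≫ dd.ι.app k ≫ iso.hom ≫ v := by rw [h3]
      _ = dd.ι.app k ≫ iso.hom ≫ v := by simp
  exact (cancel_epi iso.hom).1 h2

/-- Legs of filtered colimit cocones over mono diagrams are monomorphisms. -/
lemma leg_mono {ι : Type v} {G : ι → C}
    (hGfp : ∀ i, _root_.IsFinitelyPresentable (G i))
    (hGcov : ∀ X : C, _root_.IsFinitelyPresentable X → ∃ i, Nonempty (X ≅ G i))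
    (hPres : ∀ X : C, ∃ (J : Type v) (_ : SmallCategory J) (_ : IsFiltered J) (Dg : J ⥤ C)
      (cc : Cocone Dg), (∀ j, _root_.IsFinitelyPresentable (Dg.obj j)) ∧ Nonempty (IsColimit cc) ∧
      Nonempty (cc.pt ≅ X))
    {J : Type v} [SmallCategory J] [IsFiltered J] {N : J ⥤ C} (hN : MonoDiagram N)
    {cc : Cocone N} (hc : IsColimit cc) (j : J) : Mono (cc.ι.app j) := by
  apply mono_of_generators hGcov hPres
  intro i a b hab
  obtain ⟨hc'⟩ := hGfp i J N cc ⟨hc⟩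
  have heq : ((coyoneda.obj (op (G i))).mapCocone cc).ι.app j a
      = ((coyoneda.obj (op (G i))).mapCocone cc).ι.app j b := by
    dsimp
    rw [hab]
  rw [Types.FilteredColimit.isColimit_eq_iff _ hc'] at heq
  obtain ⟨k, f, g, hfg⟩ := heq
  have hfg' : a ≫ N.map f = b ≫ N.map g := hfg
  have h5 : a ≫ N.map (f ≫ IsFiltered.coeqHom f g)
      = b ≫ N.map (f ≫ IsFiltered.coeqHom f g) := by
    calc a ≫ N.map (f ≫ IsFiltered.coeqHom f g)
        = (a ≫ N.map f) ≫ N.map (IsFiltered.coeqHom f g) := by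
          rw [N.map_comp, Category.assoc]
      _ = (b ≫ N.map g) ≫ N.map (IsFiltered.coeqHom f g) := by rw [hfg']
      _ = b ≫ N.map (g ≫ IsFiltered.coeqHom f g) := by
          rw [N.map_comp, Category.assoc]
      _ = b ≫ N.map (f ≫ IsFiltered.coeqHom f g) := by
          rw [← IsFiltered.coeq_condition]
  haveI := hN (f ≫ IsFiltered.coeqHom f g)
  exact (cancel_mono (N.map (f ≫ IsFiltered.coeqHom f g))).1 h5

/-- For filtered colimits of mono diagrams, the mapped cocone under a hom-functor is a
colimit as soon as joint surjectivity holds. -/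
lemma mapCocone_isColimit_of_surj {ι : Type v} {G : ι → C}
    (hGfp : ∀ i, _root_.IsFinitelyPresentable (G i))
    (hGcov : ∀ X : C, _root_.IsFinitelyPresentable X → ∃ i, Nonempty (X ≅ G i))
    (hPres : ∀ X : C, ∃ (J : Type v) (_ : SmallCategory J) (_ : IsFiltered J) (Dg : J ⥤ C)
      (cc : Cocone Dg), (∀ j, _root_.IsFinitelyPresentable (Dg.obj j)) ∧ Nonempty (IsColimit cc) ∧
      Nonempty (cc.pt ≅ X))
    {J : Type v} [SmallCategory J] [IsFiltered J] {N : J ⥤ C} (hN : MonoDiagram N)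
    {cc : Cocone N} (hc : IsColimit cc) (Z : C)
    (hs : ∀ t : Z ⟶ cc.pt, ∃ (j : J) (s : Z ⟶ N.obj j), s ≫ cc.ι.app j = t) :
    Nonempty (IsColimit ((coyoneda.obj (op Z)).mapCocone cc)) := by
  constructor
  apply Types.FilteredColimit.isColimitOf
  · intro t
    obtain ⟨j, s, hsj⟩ := hs t
    exact ⟨j, s, hsj.symm⟩
  · intro j j' s s' hss
    refine ⟨IsFiltered.max j j', IsFiltered.leftToMax j j', IsFiltered.rightToMax j j', ?_⟩
    haveI := leg_mono hGfp hGcov hPres hN hc (IsFiltered.max j j')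
    have hss' : s ≫ cc.ι.app j = s' ≫ cc.ι.app j' := hss
    have : (s ≫ N.map (IsFiltered.leftToMax j j')) ≫ cc.ι.app (IsFiltered.max j j')
        = (s' ≫ N.map (IsFiltered.rightToMax j j')) ≫ cc.ι.app (IsFiltered.max j j') := by
      rw [Category.assoc, Category.assoc, cc.w, cc.w, hss']
    exact (cancel_mono (cc.ι.app (IsFiltered.max j j'))).1 this

end CSide

/-- A universe-polymorphic copy of `ℕ` as a directed preorder. -/
structure NatC : Type v where
  down : ℕ

namespace NatC

instance : Preorder NatC.{v} where
  le a b := a.down ≤ b.down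
  le_refl _ := Nat.le_refl _
  le_trans _ _ _ := Nat.le_trans

instance : IsDirected NatC.{v} (· ≤ ·) :=
  ⟨fun a b => ⟨⟨max a.down b.down⟩, Nat.le_max_left _ _, Nat.le_max_right _ _⟩⟩

instance : Nonempty NatC.{v} := ⟨⟨0⟩⟩

end NatC

section Chain

variable {C : Type u} [Category.{v} C] [HasColimits C]
variable (ι : Type v) (G : ι → C)

/-- Pairs of generator maps equalized by `q`. -/
def PairIdx {Y X : C} (q : Y ⟶ X) : Type v :=
  Σ i : ι, { ab : (G i ⟶ Y) × (G i ⟶ Y) // ab.1 ≫ q = ab.2 ≫ q }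

variable {Y X : C}

noncomputable def stepα (q : Y ⟶ X) : (∐ fun s : PairIdx ι G q => G s.1) ⟶ Y :=
  Sigma.desc fun s => s.2.1.1

noncomputable def stepβ (q : Y ⟶ X) : (∐ fun s : PairIdx ι G q => G s.1) ⟶ Y :=
  Sigma.desc fun s => s.2.1.2

noncomputable def stepObj (q : Y ⟶ X) : C := coequalizer (stepα ι G q) (stepβ ι G q)

noncomputable def stepπ (q : Y ⟶ X) : Y ⟶ stepObj ι G q := coequalizer.π _ _

instance stepπ_epi (q : Y ⟶ X) : Epi (stepπ ι G q) := by
  unfold stepπ; apply coequalizer.π_epi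

noncomputable def stepDesc (q : Y ⟶ X) : stepObj ι G q ⟶ X :=
  coequalizer.desc q (by
    apply Sigma.hom_ext
    intro s
    simp only [stepα, stepβ, colimit.ι_desc_assoc, Cofan.mk_pt, Cofan.mk_ι_app]
    exact s.2.2)

@[simp] lemma stepπ_desc (q : Y ⟶ X) : stepπ ι G q ≫ stepDesc ι G q = q :=
  coequalizer.π_desc _ _

lemma step_eq (q : Y ⟶ X) {i : ι} (a b : G i ⟶ Y) (hab : a ≫ q = b ≫ q) :
    a ≫ stepπ ι G q = b ≫ stepπ ι G q := by
  have h := Sigma.ι (fun s : PairIdx ι G q => G s.1) ⟨i, (a, b), hab⟩ ≫=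
    coequalizer.condition (stepα ι G q) (stepβ ι G q)
  simp only [stepα, stepβ, stepπ, colimit.ι_desc_assoc, Cofan.mk_pt, Cofan.mk_ι_app] at h
  exact h

variable {P : C}

noncomputable def chain (q : P ⟶ X) : ℕ → Σ' (Z : C), Z ⟶ X
  | 0 => ⟨P, q⟩
  | n+1 => ⟨stepObj ι G (chain q n).2, stepDesc ι G (chain q n).2⟩

noncomputable def chainF (q : P ⟶ X) : ℕ ⥤ C :=
  Functor.ofSequence (fun n => stepπ ι G (chain ι G q n).2)

def downF : NatC.{v} ⥤ ℕ where
  obj := NatC.down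
  map {a b} f := homOfLE (show a.down ≤ b.down from (leOfHom f : a ≤ b))

noncomputable def chainU (q : P ⟶ X) : NatC.{v} ⥤ C := downF ⋙ chainF ι G q

lemma chainF_succ (q : P ⟶ X) (m : ℕ) :
    (chainF ι G q).map (homOfLE (Nat.le_add_right m 1)) = stepπ ι G (chain ι G q m).2 :=
  Functor.ofSequence_map_homOfLE_succ (fun n => stepπ ι G (chain ι G q n).2) m

lemma chainF_w (q : P ⟶ X) {W : C} (g : ∀ n, (chain ι G q n).1 ⟶ W)
    (hg : ∀ n, stepπ ι G (chain ι G q n).2 ≫ g (n + 1) = g n)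
    {n m : ℕ} (h : n ≤ m) : (chainF ι G q).map (homOfLE h) ≫ g m = g n := by
  induction m, h using Nat.le_induction with
  | base =>
    erw [show (homOfLE (le_refl n) : (n : ℕ) ⟶ n) = 𝟙 n from Subsingleton.elim _ _,
      (chainF ι G q).map_id, Category.id_comp]
  | succ m hm ih =>
    erw [show (homOfLE (Nat.le_succ_of_le hm) : (n : ℕ) ⟶ (m + 1 : ℕ))
        = homOfLE hm ≫ homOfLE (Nat.le_add_right m 1) from Subsingleton.elim _ _,
      (chainF ι G q).map_comp, Category.assoc, chainF_succ, hg m]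
    exact ih

noncomputable def chainCocone (q : P ⟶ X) {W : C} (g : ∀ n, (chain ι G q n).1 ⟶ W)
    (hg : ∀ n, stepπ ι G (chain ι G q n).2 ≫ g (n + 1) = g n) :
    Cocone (chainU ι G q) where
  pt := W
  ι :=
    { app := fun n => g n.down
      naturality := fun a b f => by
        have h : a.down ≤ b.down := (leOfHom f : a ≤ b)
        have := chainF_w ι G q g hg h
        dsimp [chainU, downF, Monotone.functor]
        erw [Category.comp_id]
        exact this }

end Chain

section Factor

variable {C : Type u} [Category.{v} C] [HasColimits C]

lemma factor_fg {ι : Type v} {G : ι → C}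
    (hGfp : ∀ i, _root_.IsFinitelyPresentable (G i))
    (hGcov : ∀ X : C, _root_.IsFinitelyPresentable X → ∃ i, Nonempty (X ≅ G i))
    (hPres : ∀ X : C, ∃ (J : Type v) (_ : SmallCategory J) (_ : IsFiltered J) (Dg : J ⥤ C)
      (cc : Cocone Dg), (∀ j, _root_.IsFinitelyPresentable (Dg.obj j)) ∧ Nonempty (IsColimit cc) ∧
      Nonempty (cc.pt ≅ X))
    {P X : C} (q : P ⟶ X) (hP : IsFinitelyGenerated P) :
    ∃ (I : C) (e : P ⟶ I) (r : I ⟶ X), Mono r ∧ IsFinitelyGenerated I ∧ e ≫ r = q := by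
  let Ch := chainU ι G q
  haveI : HasColimit Ch := inferInstanceAs (HasColimit (chainU ι G q))
  let I := colimit Ch
  let ic : ∀ n : ℕ, (chain ι G q n).1 ⟶ I := fun n => colimit.ι Ch ⟨n⟩
  let r : I ⟶ X := colimit.desc Ch
    (chainCocone ι G q (fun n => (chain ι G q n).2) (fun n => stepπ_desc ι G _))
  have hir : ∀ n, ic n ≫ r = (chain ι G q n).2 := fun n =>
    colimit.ι_desc (chainCocone ι G q (fun n => (chain ι G q n).2) (fun n => stepπ_desc ι G _))
      ⟨n⟩
  have hic : ∀ n, ic n = stepπ ι G (chain ι G q n).2 ≫ ic (n + 1) := by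
    intro n
    have hm : Ch.map (show (⟨n⟩ : NatC.{v}) ⟶ ⟨n + 1⟩ from homOfLE (Nat.le_add_right n 1))
        = stepπ ι G (chain ι G q n).2 := chainF_succ ι G q n
    have hw := colimit.w Ch
      (show (⟨n⟩ : NatC.{v}) ⟶ ⟨n + 1⟩ from homOfLE (Nat.le_add_right n 1))
    rw [hm] at hw
    exact hw.symm
  have hpush : ∀ {n m : ℕ} (h : n ≤ m),
      (chainF ι G q).map (homOfLE h) ≫ ic m = ic n := by
    intro n m h
    exact colimit.w Ch (show (⟨n⟩ : NatC.{v}) ⟶ ⟨m⟩ from homOfLE h)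
  have monor : Mono r := by
    apply mono_of_generators hGcov hPres
    intro i a b hab
    obtain ⟨hc'⟩ := hGfp i (NatC.{v}) Ch (colimit.cocone Ch) ⟨colimit.isColimit Ch⟩
    obtain ⟨⟨n⟩, a', ha'⟩ := Types.jointly_surjective _ hc' a
    obtain ⟨⟨m⟩, b', hb'⟩ := Types.jointly_surjective _ hc' b
    have ha : a' ≫ ic n = a := ha'
    have hb : b' ≫ ic m = b := hb'
    obtain ⟨N, hn, hm'⟩ : ∃ N, n ≤ N ∧ m ≤ N := ⟨max n m, le_max_left _ _, le_max_right _ _⟩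
    obtain ⟨a'', ha''⟩ : ∃ t, t = a' ≫ (chainF ι G q).map (homOfLE hn) := ⟨_, rfl⟩
    obtain ⟨b'', hb''⟩ : ∃ t, t = b' ≫ (chainF ι G q).map (homOfLE hm') := ⟨_, rfl⟩
    have haN : a'' ≫ ic N = a := by
      erw [ha'', Category.assoc, hpush hn, ha]
    have hbN : b'' ≫ ic N = b := by
      erw [hb'', Category.assoc, hpush hm', hb]
    have h4 : a'' ≫ (chain ι G q N).2 = b'' ≫ (chain ι G q N).2 := by
      erw [← hir N, ← Category.assoc, ← Category.assoc, haN, hbN, hab]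
    have h5 := step_eq ι G (chain ι G q N).2 a'' b'' h4
    calc a = a'' ≫ ic N := haN.symm
      _ = a'' ≫ stepπ ι G (chain ι G q N).2 ≫ ic (N + 1) := by erw [← hic N]
      _ = (a'' ≫ stepπ ι G (chain ι G q N).2) ≫ ic (N + 1) := by erw [Category.assoc]
      _ = (b'' ≫ stepπ ι G (chain ι G q N).2) ≫ ic (N + 1) := by erw [h5]; rfl
      _ = b'' ≫ stepπ ι G (chain ι G q N).2 ≫ ic (N + 1) := by erw [Category.assoc]
      _ = b'' ≫ ic N := by erw [← hic N]
      _ = b := hbN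
  have fgI : IsFinitelyGenerated I := by
    intro J _ _ N hN cc hcN
    obtain ⟨hcY⟩ := hcN
    apply mapCocone_isColimit_of_surj hGfp hGcov hPres hN hcY
    intro t
    obtain ⟨hcP⟩ := hP J N hN cc ⟨hcY⟩
    obtain ⟨k, c, hc0'⟩ := Types.jointly_surjective _ hcP (ic 0 ≫ t)
    have hc0 : c ≫ cc.ι.app k = ic 0 ≫ t := hc0'
    haveI : Mono (cc.ι.app k) := leg_mono hGfp hGcov hPres hN hcY k
    have lift : ∀ n, ∃ d : (chain ι G q n).1 ⟶ N.obj k, d ≫ cc.ι.app k = ic n ≫ t := by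
      intro n
      induction n with
      | zero => exact ⟨c, hc0⟩
      | succ n ih =>
        obtain ⟨d, hd⟩ := ih
        have hw : stepα ι G (chain ι G q n).2 ≫ d = stepβ ι G (chain ι G q n).2 ≫ d := by
          apply Sigma.hom_ext
          intro s
          simp only [colimit.ι_desc_assoc, Cofan.mk_pt, Cofan.mk_ι_app, stepα, stepβ]
          apply (cancel_mono (cc.ι.app k)).1
          rw [Category.assoc, Category.assoc, hd]
          have h6 := step_eq ι G (chain ι G q n).2 s.2.1.1 s.2.1.2 s.2.2
          calc s.2.1.1 ≫ ic n ≫ t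
              = (s.2.1.1 ≫ stepπ ι G (chain ι G q n).2) ≫ ic (n + 1) ≫ t := by
                rw [hic n]; simp only [Category.assoc]; exact s.2.1.1 ≫= (Category.assoc _ _ _)
            _ = (s.2.1.2 ≫ stepπ ι G (chain ι G q n).2) ≫ ic (n + 1) ≫ t := by rw [h6]
            _ = s.2.1.2 ≫ ic n ≫ t := by
                rw [hic n]; simp only [Category.assoc]; exact s.2.1.2 ≫= (Category.assoc _ _ _).symm
        refine ⟨coequalizer.desc d hw, ?_⟩
        have hπ : stepπ ι G (chain ι G q n).2 ≫ coequalizer.desc d hw = d :=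
          coequalizer.π_desc _ _
        apply (cancel_epi (stepπ ι G (chain ι G q n).2)).1
        erw [← Category.assoc, hπ, hd, hic n, Category.assoc]; rfl
    choose d hd using lift
    have hdn : ∀ n, stepπ ι G (chain ι G q n).2 ≫ d (n + 1) = d n := by
      intro n
      apply (cancel_mono (cc.ι.app k)).1
      erw [Category.assoc, hd (n + 1), hd n, hic n, Category.assoc]; rfl
    refine ⟨k, colimit.desc Ch (chainCocone ι G q d hdn), ?_⟩
    apply colimit.hom_ext
    intro j
    erw [← Category.assoc, colimit.ι_desc]
    exact hd j.down
  exact ⟨I, ic 0, r, monor, fgI, hir 0⟩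

end Factor

section Main

variable {C : Type u} [Category.{v} C] [HasColimits C]

lemma coprod_fg {ι : Type v} {G : ι → C}
    (hGfp : ∀ i, _root_.IsFinitelyPresentable (G i))
    (hGcov : ∀ X : C, _root_.IsFinitelyPresentable X → ∃ i, Nonempty (X ≅ G i))
    (hPres : ∀ X : C, ∃ (J : Type v) (_ : SmallCategory J) (_ : IsFiltered J) (Dg : J ⥤ C)
      (cc : Cocone Dg), (∀ j, _root_.IsFinitelyPresentable (Dg.obj j)) ∧ Nonempty (IsColimit cc) ∧
      Nonempty (cc.pt ≅ X))
    (σ : Type v) [Finite σ] (A : C) (hA : IsFinitelyGenerated A) :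
    IsFinitelyGenerated (∐ fun _ : σ => A) := by
  intro J _ _ N hN cc hcN
  obtain ⟨hcY⟩ := hcN
  apply mapCocone_isColimit_of_surj hGfp hGcov hPres hN hcY
  intro t
  classical
  letI : Fintype σ := Fintype.ofFinite σ
  have hjs : ∀ e : σ, ∃ (k : J) (c : A ⟶ N.obj k),
      c ≫ cc.ι.app k = Sigma.ι (fun _ : σ => A) e ≫ t := by
    intro e
    obtain ⟨hcA⟩ := hA J N hN cc ⟨hcY⟩
    obtain ⟨k, c, hkc⟩ := Types.jointly_surjective _ hcA (Sigma.ι (fun _ : σ => A) e ≫ t)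
    exact ⟨k, c, hkc⟩
  choose k c hkc using hjs
  obtain ⟨K, hK⟩ := IsFiltered.sup_objs_exists (Finset.image k Finset.univ)
  have φ : ∀ e : σ, k e ⟶ K := fun e =>
    (hK (Finset.mem_image_of_mem k (Finset.mem_univ e))).some
  refine ⟨K, Sigma.desc (fun e => c e ≫ N.map (φ e)), ?_⟩
  apply Sigma.hom_ext
  intro e
  rw [← Category.assoc, colimit.ι_desc]
  show (c e ≫ N.map (φ e)) ≫ cc.ι.app K = Sigma.ι (fun _ : σ => A) e ≫ t
  rw [Category.assoc, cc.w (φ e), hkc e]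

lemma homFunctor_fb {ι : Type v} {G : ι → C}
    (hGfp : ∀ i, _root_.IsFinitelyPresentable (G i))
    (hGcov : ∀ X : C, _root_.IsFinitelyPresentable X → ∃ i, Nonempty (X ≅ G i))
    (hPres : ∀ X : C, ∃ (J : Type v) (_ : SmallCategory J) (_ : IsFiltered J) (Dg : J ⥤ C)
      (cc : Cocone Dg), (∀ j, _root_.IsFinitelyPresentable (Dg.obj j)) ∧ Nonempty (IsColimit cc) ∧
      Nonempty (cc.pt ≅ X))
    (A : C) (hA : IsFinitelyGenerated A) :
    FinitelyBounded (coyoneda.obj (op A)) := by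
  intro X M₀ m₀ _ hM₀
  have hfin : Finite M₀ := finite_of_isFinitelyGenerated M₀ hM₀
  have hP : IsFinitelyGenerated (∐ fun _ : M₀ => A) := coprod_fg hGfp hGcov hPres M₀ A hA
  obtain ⟨I, e, r, monor, fgI, her⟩ := factor_fg hGfp hGcov hPres
    (Sigma.desc (fun x : M₀ => (m₀ x : A ⟶ X))) hP
  refine ⟨I, r, monor, fgI, TypeCat.ofHom fun x => Sigma.ι (fun _ : M₀ => A) x ≫ e, ?_⟩
  apply TypeCat.homEquiv.injective; funext x
  show (Sigma.ι (fun _ : M₀ => A) x ≫ e) ≫ r = m₀ x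
  rw [Category.assoc, her, colimit.ι_desc]
  rfl

end Main


/-- If for every lfp category `B` and every monomorphism-preserving functor `F : C ⥤ B`
finite boundedness is equivalent to being finitary, then every finitely generated
object of `C` is finitely presentable. -/
theorem stmt_8 {C : Type u} [Category.{v} C] (hC : IsLFP C)
    (h : ∀ (B : Type (v + 1)) [Category.{v} B], IsLFP B →
      ∀ (F : C ⥤ B), F.PreservesMonomorphisms → (FinitelyBounded F ↔ IsFinitary F)) :
    ∀ A : C, IsFinitelyGenerated A → _root_.IsFinitelyPresentable A := by
  obtain ⟨hcolim, hgen, hPres⟩ := hC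
  obtain ⟨ι, G, hGfp, hGcov⟩ := hgen
  haveI : HasColimits C := hcolim
  intro A hA
  have hmono : (coyoneda.obj (op A)).PreservesMonomorphisms := by
    constructor
    intro X Y f hf
    rw [CategoryTheory.mono_iff_injective]
    intro g g' hgg
    exact (cancel_mono f).1 hgg
  have hiff := h (Type v) isLFP_type (coyoneda.obj (op A)) hmono
  have hfb := homFunctor_fb hGfp hGcov hPres A hA
  exact hiff.mp hfb
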